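/- If a complete sequence Q minimizes T among all complete sequences (that is, T(Q) ≤ T(Q') for every complete sequence Q'), then the values D_Q(i) are monotonically decreasing in i: for all indices i with 1 ≤ i < N, D_Q(i) ≥ D_Q(i+1). -/

import Mathlib

/-- The set of scenes: subsets of `Fin n` with at least `k` elements. -/
def scenes (n k : ℕ) : Finset (Finset (Fin n)) :=
  Finset.univ.filter fun s => k ≤ s.card

/-- A complete sequence: a list of queries containing every `k`-element
subset of `Fin n` exactly once. -/
def CompleteSeq (n k : ℕ) (Q : List (Finset (Fin n))) : Prop :=
  Q.Nodup ∧ ∀ q : Finset (Fin n), q ∈ Q ↔ q.card = k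

/-- `tau n Q s` is the least (1-based) index `i` such that `q_i ⊆ s`. -/
def tau (n : ℕ) (Q : List (Finset (Fin n))) (s : Finset (Fin n)) : ℕ :=
  Q.findIdx (fun q => decide (q ⊆ s)) + 1

/-- The expected time to discovery `T(Q) = (1/|S|) Σ_{s∈S} τ(Q,s)`. -/
def T (n k : ℕ) (Q : List (Finset (Fin n))) : ℚ :=
  ((scenes n k).card : ℚ)⁻¹ * ∑ s ∈ scenes n k, (tau n Q s : ℚ)

/-- `D n k Q i`: the number of scenes discovered by the query at (1-based)
position `i` of `Q` but not by any earlier query. -/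
def D (n k : ℕ) (Q : List (Finset (Fin n))) (i : ℕ) : ℕ :=
  ((scenes n k).filter fun s =>
    Q.getD (i - 1) ∅ ⊆ s ∧ ∀ j < i - 1, ¬ Q.getD j ∅ ⊆ s).card

/-- The list obtained from `Q` by swapping the queries at (1-based)
positions `i` and `i+1`. -/
def swapAdj (n : ℕ) (Q : List (Finset (Fin n))) (i : ℕ) : List (Finset (Fin n)) :=
  (Q.set (i - 1) (Q.getD i ∅)).set i (Q.getD (i - 1) ∅)

/-- If a complete sequence `Q` minimizes `T` among all complete sequences,
then `D_Q(i)` is monotonically decreasing in `i`. -/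
theorem monotonicity_of_optimal (n k : ℕ) (hk1 : 1 ≤ k) (hkn : k ≤ n)
    (Q : List (Finset (Fin n))) (hQ : CompleteSeq n k Q)
    (hmin : ∀ Q' : List (Finset (Fin n)), CompleteSeq n k Q' → T n k Q ≤ T n k Q') :
    ∀ i : ℕ, 1 ≤ i → i < Nat.choose n k → D n k Q (i + 1) ≤ D n k Q i := by
  intro i hi1 hiN
  obtain ⟨hnd, hmem⟩ := hQ
  -- length of Q
  have hlen : Q.length = Nat.choose n k := by
    have h1 : Q.toFinset = Finset.powersetCard k (Finset.univ : Finset (Fin n)) := by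
      ext q
      simp [Finset.mem_powersetCard, hmem q]
    have h2 := List.toFinset_card_of_nodup hnd
    rw [h1, Finset.card_powersetCard] at h2
    simpa using h2.symm
  obtain ⟨p, rfl⟩ : ∃ p, i = p + 1 := ⟨i - 1, by omega⟩
  have h2 : p + 1 < Q.length := by omega
  have hp : p < Q.length := by omega
  obtain ⟨L, a, b, R, hdec, hL⟩ : ∃ L a b R, Q = L ++ a :: b :: R ∧ L.length = p := by
    refine ⟨Q.take p, Q[p], Q[p+1], Q.drop (p+2), ?_, by simp [List.length_take]; omega⟩
    conv_lhs => rw [← List.take_append_drop p Q]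
    rw [List.drop_eq_getElem_cons hp, List.drop_eq_getElem_cons h2]
  subst hdec
  subst hL
  -- getD values
  have hga : (L ++ a :: b :: R).getD L.length ∅ = a := by
    rw [List.getD_eq_getElem _ _ hp, List.getElem_append_right (le_refl _)]
    simp
  have hgb : (L ++ a :: b :: R).getD (L.length+1) ∅ = b := by
    rw [List.getD_eq_getElem _ _ h2,
      List.getElem_append_right (by omega : L.length ≤ L.length + 1)]
    simp
  have hgL : ∀ j (hj : j < L.length), (L ++ a :: b :: R).getD j ∅ = L[j] := by
    intro j hj
    rw [List.getD_eq_getElem _ _ (by simp; omega), List.getElem_append_left hj]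
  -- the swapped list
  have hswap : swapAdj n (L ++ a :: b :: R) (L.length+1) = L ++ b :: a :: R := by
    unfold swapAdj
    simp only [Nat.add_sub_cancel, hga, hgb]
    rw [List.set_append, if_neg (by omega), List.set_append, if_neg (by omega)]
    simp
  have hperm : (L ++ b :: a :: R).Perm (L ++ a :: b :: R) :=
    List.Perm.append_left _ (List.Perm.swap a b R)
  have hQ' : CompleteSeq n k (L ++ b :: a :: R) :=
    ⟨hperm.nodup_iff.mpr hnd, fun q => (hperm.mem_iff).trans (hmem q)⟩
  -- sum inequality from optimality
  have hcardpos : 0 < (scenes n k).card := by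
    refine Finset.card_pos.mpr ⟨Finset.univ, ?_⟩
    simp [scenes]
    simpa using hkn
  have hT := hmin _ hQ'
  have hsum : ∑ s ∈ scenes n k, (tau n (L ++ a :: b :: R) s : ℚ)
      ≤ ∑ s ∈ scenes n k, (tau n (L ++ b :: a :: R) s : ℚ) := by
    unfold T at hT
    have hpos : (0:ℚ) < ((scenes n k).card : ℚ)⁻¹ := by positivity
    exact (mul_le_mul_iff_right₀ hpos).mp hT
  -- pointwise key identity
  have key : ∀ s : Finset (Fin n),
      (tau n (L ++ b :: a :: R) s : ℚ)
        + (if (∀ x ∈ L, ¬ x ⊆ s) ∧ ¬ a ⊆ s ∧ b ⊆ s then 1 else 0)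
      = (tau n (L ++ a :: b :: R) s : ℚ)
        + (if (∀ x ∈ L, ¬ x ⊆ s) ∧ a ⊆ s ∧ ¬ b ⊆ s then 1 else 0) := by
    intro s
    unfold tau
    rw [List.findIdx_append, List.findIdx_append]
    by_cases hLs : ∀ x ∈ L, ¬ x ⊆ s
    · have hLlen : L.findIdx (fun q => decide (q ⊆ s)) = L.length :=
        List.findIdx_eq_length.mpr (by simpa using hLs)
      rw [hLlen]
      simp only [lt_irrefl, if_false]
      by_cases ha : a ⊆ s <;> by_cases hb : b ⊆ s <;>
        · simp [List.findIdx_cons, ha, hb, hLs]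
          try rw [if_pos hLs]
          try (push_cast; ring)
    · have hex : ∃ x ∈ L, (fun q => decide (q ⊆ s)) x = true := by
        push_neg at hLs
        obtain ⟨x, hx, hxs⟩ := hLs
        exact ⟨x, hx, by simpa using hxs⟩
      have hlt := List.findIdx_lt_length_of_exists hex
      rw [if_pos hlt, if_pos hlt]
      simp [hLs]
  -- card inequality
  have hPP' : ((scenes n k).filter fun s => (∀ x ∈ L, ¬ x ⊆ s) ∧ ¬ a ⊆ s ∧ b ⊆ s).card
      ≤ ((scenes n k).filter fun s => (∀ x ∈ L, ¬ x ⊆ s) ∧ a ⊆ s ∧ ¬ b ⊆ s).card := by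
    have h1 := Finset.sum_congr rfl (fun s (_ : s ∈ scenes n k) => key s)
    rw [Finset.sum_add_distrib, Finset.sum_add_distrib, Finset.sum_boole, Finset.sum_boole] at h1
    have : (((scenes n k).filter fun s => (∀ x ∈ L, ¬ x ⊆ s) ∧ ¬ a ⊆ s ∧ b ⊆ s).card : ℚ)
        ≤ (((scenes n k).filter fun s => (∀ x ∈ L, ¬ x ⊆ s) ∧ a ⊆ s ∧ ¬ b ⊆ s).card : ℚ) := by
      linarith
    exact_mod_cast this
  -- translate the blocking condition
  have htrans : ∀ s : Finset (Fin n),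
      (∀ j < L.length, ¬ (L ++ a :: b :: R).getD j ∅ ⊆ s) ↔ (∀ x ∈ L, ¬ x ⊆ s) := by
    intro s
    constructor
    · intro h x hx
      obtain ⟨j, hj, rfl⟩ := List.mem_iff_getElem.mp hx
      have hjp : j < L.length := hj
      have := h j hjp
      rwa [hgL j hjp] at this
    · intro h j hj
      rw [hgL j hj]
      exact h _ (List.getElem_mem _)
  -- rewrite D's
  unfold D
  simp only [Nat.add_sub_cancel]
  have hDsucc : ((scenes n k).filter fun s =>
        (L ++ a :: b :: R).getD (L.length+1) ∅ ⊆ s ∧ ∀ j < L.length+1, ¬ (L ++ a :: b :: R).getD j ∅ ⊆ s)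
      = (scenes n k).filter fun s => (∀ x ∈ L, ¬ x ⊆ s) ∧ ¬ a ⊆ s ∧ b ⊆ s := by
    apply Finset.filter_congr
    intro s _
    rw [hgb, Nat.forall_lt_succ_right, hga]
    constructor
    · rintro ⟨hb, hall, hna⟩
      exact ⟨(htrans s).mp hall, hna, hb⟩
    · rintro ⟨hall, hna, hb⟩
      exact ⟨hb, (htrans s).mpr hall, hna⟩
  rw [hDsucc]
  refine le_trans hPP' (Finset.card_le_card ?_)
  intro s hs
  rw [Finset.mem_filter] at hs ⊢
  obtain ⟨hs1, hall, ha, _⟩ := hs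
  refine ⟨hs1, ?_, (htrans s).mpr hall⟩
  rw [hga]
  exact ha
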